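/- In B_4, if β', β'', β''' are strongly quasipositive braids (possibly trivial), then the braid σ_{1,3}^{−1} σ_{2,4} β' σ_{3,4} β'' σ_{1,2} β''' is quasipositive. -/

import Mathlib

/-- Relations for the braid group `Bₙ`: the generator `k : Fin (n-1)` represents `σ_{k+1}`,
and we impose `σ_i σ_j = σ_j σ_i` for `|i - j| > 1` and `σ_i σ_{i+1} σ_i = σ_{i+1} σ_i σ_{i+1}`. -/
def braidRels (n : ℕ) : Set (FreeGroup (Fin (n - 1))) :=
  {r | ∃ i j : Fin (n - 1), (i : ℕ) + 1 < (j : ℕ) ∧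
      r = FreeGroup.of i * FreeGroup.of j * (FreeGroup.of i)⁻¹ * (FreeGroup.of j)⁻¹} ∪
  {r | ∃ i j : Fin (n - 1), (j : ℕ) = (i : ℕ) + 1 ∧
      r = FreeGroup.of i * FreeGroup.of j * FreeGroup.of i *
          (FreeGroup.of j * FreeGroup.of i * FreeGroup.of j)⁻¹}

/-- The braid group on `n` strands, presented with generators `σ_1, …, σ_{n-1}`. -/
abbrev BraidGroup (n : ℕ) : Type := PresentedGroup (braidRels n)

/-- The standard generator `σ_i` of `Bₙ`, for `1 ≤ i ≤ n - 1` (junk value `1` otherwise). -/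
def sigma (n i : ℕ) : BraidGroup n :=
  if h : 1 ≤ i ∧ i ≤ n - 1 then PresentedGroup.of ⟨i - 1, by omega⟩ else 1

/-- The word `σ_{j-1} σ_{j-2} ⋯ σ_{i+1}`. -/
def bandConj (n i j : ℕ) : BraidGroup n :=
  ((List.range (j - 1 - i)).map fun t => sigma n (j - 1 - t)).prod

/-- The band generator `σ_{i,j} = (σ_{j-1} σ_{j-2} ⋯ σ_{i+1}) σ_i (σ_{j-1} σ_{j-2} ⋯ σ_{i+1})⁻¹`.
In particular `σ_{i,i+1} = σ_i`. -/
def band (n i j : ℕ) : BraidGroup n :=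
  bandConj n i j * sigma n i * (bandConj n i j)⁻¹

/-- The set of band generators `σ_{i,j}`, `1 ≤ i < j ≤ n`, of `Bₙ`. -/
def bandGens (n : ℕ) : Set (BraidGroup n) :=
  {x | ∃ i j : ℕ, 1 ≤ i ∧ i < j ∧ j ≤ n ∧ x = band n i j}

/-- A braid is strongly quasipositive if it is a product of band generators, i.e. lies in the
submonoid generated by the `σ_{i,j}`, `1 ≤ i < j ≤ n`. -/
def StronglyQuasipositive (n : ℕ) (x : BraidGroup n) : Prop :=
  x ∈ Submonoid.closure (bandGens n)

/-- A braid is quasipositive if it lies in the submonoid generated by all conjugates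
`α σ_k α⁻¹` of the standard generators. -/
def Quasipositive (n : ℕ) (x : BraidGroup n) : Prop :=
  x ∈ Submonoid.closure
    {x : BraidGroup n | ∃ (α : BraidGroup n) (k : ℕ), 1 ≤ k ∧ k ≤ n - 1 ∧ x = α * sigma n k * α⁻¹}


section BraidAux

/-- Any relation of the presentation maps to `1` in the presented group. -/
lemma braid_rel_eq_one {n : ℕ} {r : FreeGroup (Fin (n-1))} (h : r ∈ braidRels n) :
    PresentedGroup.mk (braidRels n) r = 1 :=
  (QuotientGroup.eq_one_iff r).mpr (Subgroup.subset_normalClosure h)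

/-- The braid relation `σᵢ σⱼ σᵢ = σⱼ σᵢ σⱼ` for `j = i + 1`. -/
lemma braid_rel_of {n : ℕ} (i j : Fin (n-1)) (h : (j:ℕ) = (i:ℕ)+1) :
    (PresentedGroup.of i : BraidGroup n) * PresentedGroup.of j * PresentedGroup.of i
      = PresentedGroup.of j * PresentedGroup.of i * PresentedGroup.of j := by
  have h1 := braid_rel_eq_one (n := n) (Or.inr ⟨i, j, h, rfl⟩)
  simp only [map_mul, map_inv] at h1
  have hmk : ∀ x : Fin (n-1), PresentedGroup.mk (braidRels n) (FreeGroup.of x)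
      = PresentedGroup.of x := fun x => rfl
  simp only [hmk] at h1
  exact mul_inv_eq_one.mp h1

lemma sigma1_def : sigma 4 1 = PresentedGroup.of ⟨0, by omega⟩ := by simp [sigma]
lemma sigma2_def : sigma 4 2 = PresentedGroup.of ⟨1, by omega⟩ := by simp [sigma]
lemma sigma3_def : sigma 4 3 = PresentedGroup.of ⟨2, by omega⟩ := by simp [sigma]

lemma braid12 : sigma 4 1 * sigma 4 2 * sigma 4 1 = sigma 4 2 * sigma 4 1 * sigma 4 2 := by
  rw [sigma1_def, sigma2_def]; exact braid_rel_of _ _ rfl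

lemma band13_def : band 4 1 3 = sigma 4 2 * sigma 4 1 * (sigma 4 2)⁻¹ := by
  have : bandConj 4 1 3 = sigma 4 2 := by simp [bandConj, List.range_succ]
  simp only [band, this]

lemma band24_def : band 4 2 4 = sigma 4 3 * sigma 4 2 * (sigma 4 3)⁻¹ := by
  have : bandConj 4 2 4 = sigma 4 3 := by simp [bandConj, List.range_succ]
  simp only [band, this]

lemma band34_def : band 4 3 4 = sigma 4 3 := by
  have : bandConj 4 3 4 = 1 := by simp [bandConj]
  simp only [band, this]; group

lemma band12_def : band 4 1 2 = sigma 4 1 := by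
  have : bandConj 4 1 2 = 1 := by simp [bandConj]
  simp only [band, this]; group

/-- The key band identity `σ₂₄ σ₃₄ σ₁₂ = σ₃₄ σ₁₂ σ₁₃` in `B₄`. -/
lemma band_key : band 4 2 4 * band 4 3 4 * band 4 1 2 = band 4 3 4 * band 4 1 2 * band 4 1 3 := by
  rw [band13_def, band24_def, band34_def, band12_def]
  calc sigma 4 3 * sigma 4 2 * (sigma 4 3)⁻¹ * sigma 4 3 * sigma 4 1
      = sigma 4 3 * (sigma 4 2 * sigma 4 1 * sigma 4 2) * (sigma 4 2)⁻¹ := by group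
    _ = sigma 4 3 * (sigma 4 1 * sigma 4 2 * sigma 4 1) * (sigma 4 2)⁻¹ := by rw [braid12]
    _ = sigma 4 3 * sigma 4 1 * (sigma 4 2 * sigma 4 1 * (sigma 4 2)⁻¹) := by group

/-- Quasipositivity is closed under conjugation. -/
lemma qp_conj {n : ℕ} (g : BraidGroup n) {x : BraidGroup n} (hx : Quasipositive n x) :
    Quasipositive n (g * x * g⁻¹) := by
  induction hx using Submonoid.closure_induction with
  | mem y hy =>
      obtain ⟨α, k, hk1, hk2, rfl⟩ := hy
      exact Submonoid.subset_closure ⟨g * α, k, hk1, hk2, by group⟩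
  | one => rw [mul_one, mul_inv_cancel]; exact Submonoid.one_mem _
  | mul x y hx hy ihx ihy =>
      have : g * (x * y) * g⁻¹ = (g * x * g⁻¹) * (g * y * g⁻¹) := by group
      rw [this]; exact mul_mem ihx ihy

/-- Band generators are quasipositive. -/
lemma band_qp {n i j : ℕ} (h1 : 1 ≤ i) (h2 : i < j) (h3 : j ≤ n) :
    Quasipositive n (band n i j) :=
  Submonoid.subset_closure ⟨bandConj n i j, i, h1, by omega, rfl⟩

/-- Strongly quasipositive braids are quasipositive. -/
lemma sqp_qp {n : ℕ} {x : BraidGroup n} (hx : StronglyQuasipositive n x) :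
    Quasipositive n x := by
  refine Submonoid.closure_le.mpr ?_ hx
  rintro y ⟨i, j, h1, h2, h3, rfl⟩
  exact band_qp h1 h2 h3

end BraidAux

/-- In `B₄`, for strongly quasipositive `β', β'', β'''`, the braid
`σ_{1,3}⁻¹ σ_{2,4} β' σ_{3,4} β'' σ_{1,2} β'''` is quasipositive. -/
theorem claim_case2_s12 (β' β'' β''' : BraidGroup 4)
    (hβ' : StronglyQuasipositive 4 β') (hβ'' : StronglyQuasipositive 4 β'')
    (hβ''' : StronglyQuasipositive 4 β''') :
    Quasipositive 4
      ((band 4 1 3)⁻¹ * band 4 2 4 * β' * band 4 3 4 * β'' * band 4 1 2 * β''') := by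
  -- Abbreviations
  set s13 := band 4 1 3 with hs13
  set s24 := band 4 2 4 with hs24
  set s34 := band 4 3 4 with hs34
  set s12 := band 4 1 2 with hs12
  -- From the key identity, express σ₂₄ as a product involving σ₁₃.
  have hk : s24 = s34 * s12 * s13 * (s34 * s12)⁻¹ := by
    rw [← band_key, hs12, hs34, hs24]; group
  -- Decompose the braid as a product of quasipositive factors.
  have hdecomp : s13⁻¹ * s24 * β' * s34 * β'' * s12 * β''' =
      (s13⁻¹ * s34 * s13) * (s13⁻¹ * s12 * s13) *
      ((s34 * s12)⁻¹ * β' * (s34 * s12)) * (s12⁻¹ * β'' * s12) * β''' := by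
    rw [hk]; group
  rw [hdecomp]
  have h34 : Quasipositive 4 s34 := band_qp (by norm_num) (by norm_num) (by norm_num)
  have h12 : Quasipositive 4 s12 := band_qp (by norm_num) (by norm_num) (by norm_num)
  have c1 : Quasipositive 4 (s13⁻¹ * s34 * s13) := by
    have := qp_conj (s13⁻¹) h34; simpa using this
  have c2 : Quasipositive 4 (s13⁻¹ * s12 * s13) := by
    have := qp_conj (s13⁻¹) h12; simpa using this
  have c3 : Quasipositive 4 ((s34 * s12)⁻¹ * β' * (s34 * s12)) := by
    have := qp_conj ((s34 * s12)⁻¹) (sqp_qp hβ'); simpa using this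
  have c4 : Quasipositive 4 (s12⁻¹ * β'' * s12) := by
    have := qp_conj (s12⁻¹) (sqp_qp hβ''); simpa using this
  exact mul_mem (mul_mem (mul_mem (mul_mem c1 c2) c3) c4) (sqp_qp hβ''')
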